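/- Let H = {z ∈ ℂ : Im z > 0} and define φ : H → ℝ by φ(z) = Σ_{j=1}^∞ 2^{−j} e^{−2^j Im z}. Then the series converges and defines a smooth function on H with 0 ≤ φ ≤ 1; φ is subharmonic, with Δφ(z) = Σ_{j=1}^∞ 2^{j} e^{−2^j Im z} ≥ 0; and Δφ(z) → ∞ as z approaches the boundary, i.e. for every M > 0 there is δ > 0 such that Δφ(z) ≥ M whenever 0 < Im z < δ. -/

import Mathlib

noncomputable section

/-- The real Laplacian `Δφ = ∂²φ/∂x² + ∂²φ/∂y²` of a function on `ℂ`. -/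
def lapC (φ : ℂ → ℝ) (z : ℂ) : ℝ :=
  fderiv ℝ (fun w => fderiv ℝ φ w 1) z 1
    + fderiv ℝ (fun w => fderiv ℝ φ w Complex.I) z Complex.I

/-- The weight `φ(z) = Σ_{j=1}^∞ 2^{−j} e^{−2^j Im z}` on the upper half plane. -/
def phiH : ℂ → ℝ := fun z => ∑' j : ℕ, ((2:ℝ)⁻¹)^(j+1) * Real.exp (-(2:ℝ)^(j+1) * z.im)

open Real Filter Topology

lemma nat_le_two_pow' (j : ℕ) : (j + 1 : ℝ) ≤ (2:ℝ)^(j+1) := by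
  have h : (j+1 : ℕ) ≤ 2^(j+1) := (Nat.lt_two_pow_self (n := j+1)).le
  exact_mod_cast h

lemma summable_base' {y : ℝ} (hy : 0 ≤ y) :
    Summable (fun j : ℕ => ((2:ℝ)⁻¹)^(j+1) * Real.exp (-(2:ℝ)^(j+1) * y)) := by
  apply Summable.of_nonneg_of_le (fun j => by positivity) (fun j => ?_)
    (((summable_geometric_of_lt_one (by norm_num) (by norm_num : (2:ℝ)⁻¹ < 1)).mul_left (2:ℝ)⁻¹))
  · calc ((2:ℝ)⁻¹)^(j+1) * Real.exp (-(2:ℝ)^(j+1) * y)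
        ≤ ((2:ℝ)⁻¹)^(j+1) * 1 := by
          apply mul_le_mul_of_nonneg_left _ (by positivity)
          rw [Real.exp_le_one_iff]
          have : (0:ℝ) ≤ (2:ℝ)^(j+1) * y := by positivity
          linarith
      _ = (2:ℝ)⁻¹ * ((2:ℝ)⁻¹)^j := by ring

lemma summable_exp_eps' {ε : ℝ} (hε : 0 < ε) :
    Summable (fun j : ℕ => Real.exp (-(2:ℝ)^(j+1) * ε)) := by
  apply Summable.of_nonneg_of_le (fun j => (Real.exp_pos _).le) (fun j => ?_)
    ((summable_geometric_of_lt_one (Real.exp_pos _).le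
      (Real.exp_lt_one_iff.mpr (neg_neg_iff_pos.mpr hε))).mul_left (Real.exp (-ε)))
  calc Real.exp (-(2:ℝ)^(j+1) * ε) ≤ Real.exp (-ε) ^ (j+1) := by
        rw [← Real.exp_nat_mul]
        apply Real.exp_le_exp.mpr
        push_cast
        nlinarith [nat_le_two_pow' j]
    _ = Real.exp (-ε) * Real.exp (-ε)^j := by ring

lemma summable_snd_eps' {ε : ℝ} (hε : 0 < ε) :
    Summable (fun j : ℕ => (2:ℝ)^(j+1) * Real.exp (-(2:ℝ)^(j+1) * ε)) := by
  have hb : ∀ j : ℕ, (2:ℝ)^(j+1) * Real.exp (-(2:ℝ)^(j+1) * ε)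
      ≤ (2/ε) * Real.exp (-(ε/2)) ^ (j+1) := by
    intro j
    set t : ℝ := (2:ℝ)^(j+1) with ht
    have htpos : (0:ℝ) < t := by positivity
    have h1 : t * (ε/2) ≤ Real.exp (t * (ε/2)) := by
      nlinarith [Real.add_one_le_exp (t * (ε/2))]
    have h2 : t ≤ (2/ε) * Real.exp (t * (ε/2)) := by
      rw [div_mul_eq_mul_div, le_div_iff₀ hε]
      nlinarith
    have h3 : Real.exp (-(t * (ε/2))) ≤ Real.exp (-(ε/2)) ^ (j+1) := by
      rw [← Real.exp_nat_mul]
      apply Real.exp_le_exp.mpr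
      push_cast
      nlinarith [nat_le_two_pow' j]
    calc t * Real.exp (-t * ε)
        ≤ ((2/ε) * Real.exp (t * (ε/2))) * Real.exp (-t * ε) := by
          apply mul_le_mul_of_nonneg_right h2 (Real.exp_pos _).le
      _ = (2/ε) * Real.exp (-(t * (ε/2))) := by
          rw [mul_assoc, ← Real.exp_add]; ring_nf
      _ ≤ (2/ε) * Real.exp (-(ε/2)) ^ (j+1) := by
          apply mul_le_mul_of_nonneg_left h3 (by positivity)
  apply Summable.of_nonneg_of_le (fun j => by positivity) hb
  have : Summable (fun j : ℕ => Real.exp (-(ε/2)) ^ (j+1)) := by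
    apply Summable.comp_injective (summable_geometric_of_lt_one (Real.exp_pos _).le
      (Real.exp_lt_one_iff.mpr (by linarith))) (add_left_injective 1)
  exact this.mul_left _

lemma hasFDerivAt_cexpim (c b : ℝ) (z : ℂ) :
    HasFDerivAt (fun w : ℂ => c * Real.exp (b * w.im))
      ((c * b * Real.exp (b * z.im)) • Complex.imCLM) z := by
  have h1 : HasDerivAt (fun y : ℝ => c * Real.exp (b * y))
      (c * (Real.exp (b * z.im) * b)) z.im := by
    simpa using (((hasDerivAt_id z.im).const_mul b).exp.const_mul c)
  have h2 : HasFDerivAt (fun w : ℂ => w.im) Complex.imCLM z := Complex.imCLM.hasFDerivAt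
  have h3 := h1.hasFDerivAt.comp z h2
  refine h3.congr_fderiv ?_
  ext v
  simp [mul_comm, mul_assoc, mul_left_comm]

lemma tsum_clm_apply {f : ℕ → ℂ →L[ℝ] ℝ} (hf : Summable f) (v : ℂ) :
    (∑' j, f j) v = ∑' j, f j v :=
  (ContinuousLinearMap.apply ℝ ℝ v).map_tsum hf

lemma lap_eq {z : ℂ} (hz : 0 < z.im) :
    lapC phiH z = ∑' j : ℕ, (2:ℝ)^(j+1) * Real.exp (-(2:ℝ)^(j+1) * z.im) := by
  set ε := z.im / 2 with hεdef
  have hε : 0 < ε := half_pos hz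
  set s : Set ℂ := {w : ℂ | ε < w.im} with hsdef
  have hso : IsOpen s := isOpen_lt continuous_const Complex.continuous_im
  have hsc : IsPreconnected s := (convex_halfSpace_im_gt ε).isPreconnected
  have hzs : z ∈ s := by simp only [hsdef, Set.mem_setOf_eq]; linarith
  have hf : ∀ (j : ℕ) (w : ℂ), w ∈ s → HasFDerivAt
      (fun w : ℂ => ((2:ℝ)⁻¹)^(j+1) * Real.exp (-(2:ℝ)^(j+1) * w.im))
      ((((2:ℝ)⁻¹)^(j+1) * (-(2:ℝ)^(j+1)) * Real.exp (-(2:ℝ)^(j+1) * w.im)) • Complex.imCLM) w :=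
    fun j w _ => hasFDerivAt_cexpim (((2:ℝ)⁻¹)^(j+1)) (-(2:ℝ)^(j+1)) w
  have hcb : ∀ j : ℕ, ((2:ℝ)⁻¹)^(j+1) * ((2:ℝ)^(j+1)) = 1 := by
    intro j; rw [← mul_pow]; norm_num
  have hnorm : ∀ (j : ℕ) (w : ℂ), w ∈ s →
      ‖(((2:ℝ)⁻¹)^(j+1) * (-(2:ℝ)^(j+1)) * Real.exp (-(2:ℝ)^(j+1) * w.im)) • Complex.imCLM‖
        ≤ Real.exp (-(2:ℝ)^(j+1) * ε) := by
    intro j w hw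
    rw [norm_smul _ Complex.imCLM, Complex.imCLM_norm, mul_one, Real.norm_eq_abs, abs_mul, abs_mul,
      abs_of_pos (Real.exp_pos _), abs_neg, abs_of_pos (by positivity : (0:ℝ) < ((2:ℝ)⁻¹)^(j+1)),
      abs_of_pos (by positivity : (0:ℝ) < (2:ℝ)^(j+1)), hcb, one_mul]
    apply Real.exp_le_exp.mpr
    have hw' : ε < w.im := hw
    nlinarith [pow_pos (by norm_num : (0:ℝ) < 2) (j+1)]
  have key : ∀ w, w ∈ s → HasFDerivAt phiH
      (∑' j, ((((2:ℝ)⁻¹)^(j+1) * (-(2:ℝ)^(j+1)) * Real.exp (-(2:ℝ)^(j+1) * w.im)) • Complex.imCLM)) w :=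
    fun w hw => hasFDerivAt_tsum_of_isPreconnected (summable_exp_eps' hε) hso hsc hf hnorm hzs
      (summable_base' hz.le) hw
  have hsumF' : ∀ w, w ∈ s → Summable (fun j =>
      (((2:ℝ)⁻¹)^(j+1) * (-(2:ℝ)^(j+1)) * Real.exp (-(2:ℝ)^(j+1) * w.im)) • Complex.imCLM) :=
    fun w hw => Summable.of_norm_bounded (summable_exp_eps' hε) (fun j => hnorm j w hw)
  have hone : ∀ w ∈ s, fderiv ℝ phiH w 1 = 0 := by
    intro w hw
    rw [(key w hw).fderiv, tsum_clm_apply (hsumF' w hw)]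
    simp
  have hIeq : ∀ w ∈ s, fderiv ℝ phiH w Complex.I
      = ∑' j, (-1:ℝ) * Real.exp (-(2:ℝ)^(j+1) * w.im) := by
    intro w hw
    rw [(key w hw).fderiv, tsum_clm_apply (hsumF' w hw)]
    congr 1; funext j
    simp only [ContinuousLinearMap.smul_apply, Complex.imCLM_apply, Complex.I_im, smul_eq_mul,
      mul_one]
    linear_combination (-Real.exp (-(2:ℝ)^(j+1) * w.im)) * hcb j
  have e1 : fderiv ℝ (fun w => fderiv ℝ phiH w 1) z 1 = 0 := by
    have heq : (fun w => fderiv ℝ phiH w 1) =ᶠ[𝓝 z] (fun _ => (0:ℝ)) :=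
      Filter.eventuallyEq_of_mem (hso.mem_nhds hzs) hone
    rw [heq.fderiv_eq, fderiv_fun_const]
    simp
  have hg : ∀ (j : ℕ) (w : ℂ), w ∈ s → HasFDerivAt
      (fun w : ℂ => (-1:ℝ) * Real.exp (-(2:ℝ)^(j+1) * w.im))
      (((-1:ℝ) * (-(2:ℝ)^(j+1)) * Real.exp (-(2:ℝ)^(j+1) * w.im)) • Complex.imCLM) w :=
    fun j w _ => hasFDerivAt_cexpim (-1) (-(2:ℝ)^(j+1)) w
  have hgnorm : ∀ (j : ℕ) (w : ℂ), w ∈ s →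
      ‖((-1:ℝ) * (-(2:ℝ)^(j+1)) * Real.exp (-(2:ℝ)^(j+1) * w.im)) • Complex.imCLM‖
        ≤ (2:ℝ)^(j+1) * Real.exp (-(2:ℝ)^(j+1) * ε) := by
    intro j w hw
    rw [norm_smul _ Complex.imCLM, Complex.imCLM_norm, mul_one, Real.norm_eq_abs, abs_mul, abs_mul,
      abs_of_pos (Real.exp_pos _), abs_neg, abs_neg, abs_one,
      abs_of_pos (by positivity : (0:ℝ) < (2:ℝ)^(j+1)), one_mul]
    apply mul_le_mul_of_nonneg_left _ (by positivity)
    apply Real.exp_le_exp.mpr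
    have hw' : ε < w.im := hw
    nlinarith [pow_pos (by norm_num : (0:ℝ) < 2) (j+1)]
  have hsumG : Summable (fun j =>
      ((-1:ℝ) * (-(2:ℝ)^(j+1)) * Real.exp (-(2:ℝ)^(j+1) * z.im)) • Complex.imCLM) :=
    Summable.of_norm_bounded (summable_snd_eps' hε) (fun j => hgnorm j z hzs)
  have keyG : HasFDerivAt (fun w : ℂ => ∑' j, (-1:ℝ) * Real.exp (-(2:ℝ)^(j+1) * w.im))
      (∑' j, ((-1:ℝ) * (-(2:ℝ)^(j+1)) * Real.exp (-(2:ℝ)^(j+1) * z.im)) • Complex.imCLM) z :=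
    hasFDerivAt_tsum_of_isPreconnected (summable_snd_eps' hε) hso hsc hg hgnorm hzs
      ((summable_exp_eps' hz).mul_left (-1)) hzs
  have e2 : fderiv ℝ (fun w => fderiv ℝ phiH w Complex.I) z Complex.I
      = ∑' j, (2:ℝ)^(j+1) * Real.exp (-(2:ℝ)^(j+1) * z.im) := by
    have heq : (fun w => fderiv ℝ phiH w Complex.I) =ᶠ[𝓝 z]
        (fun w => ∑' j, (-1:ℝ) * Real.exp (-(2:ℝ)^(j+1) * w.im)) :=
      Filter.eventuallyEq_of_mem (hso.mem_nhds hzs) hIeq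
    rw [heq.fderiv_eq, keyG.fderiv, tsum_clm_apply hsumG]
    congr 1; funext j
    simp only [ContinuousLinearMap.smul_apply, Complex.imCLM_apply, Complex.I_im, smul_eq_mul,
      mul_one]
    ring
  rw [lapC, e1, e2, zero_add]

lemma summable_geom_half : Summable (fun j : ℕ => ((2:ℝ)⁻¹)^(j+1)) := by
  simp only [pow_succ]
  exact (summable_geometric_of_lt_one (by norm_num) (by norm_num)).mul_right _

lemma tsum_geom_half : ∑' j : ℕ, ((2:ℝ)⁻¹)^(j+1) = 1 := by
  calc ∑' j : ℕ, ((2:ℝ)⁻¹)^(j+1) = ∑' j : ℕ, ((2:ℝ)⁻¹)^j * (2:ℝ)⁻¹ := by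
        simp only [pow_succ]
    _ = (∑' j : ℕ, ((2:ℝ)⁻¹)^j) * (2:ℝ)⁻¹ := tsum_mul_right
    _ = 1 := by
        rw [tsum_geometric_of_lt_one (by norm_num) (by norm_num)]
        norm_num

-- coefficients of the power series
open Classical in
def aCoef : ℕ → ℝ := fun n => if n ∈ Set.range (fun j : ℕ => 2^(j+1)) then ((n:ℝ))⁻¹ else 0

lemma aCoef_abs_le (n : ℕ) : |aCoef n| ≤ 1 := by
  classical
  rw [aCoef]
  split_ifs with h
  · obtain ⟨j, rfl⟩ := h
    rw [abs_of_nonneg (by positivity)]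
    rw [inv_le_one_iff₀]
    right
    exact_mod_cast Nat.one_le_two_pow
  · simp

def pSeries : FormalMultilinearSeries ℝ ℝ ℝ :=
  fun n => aCoef n • ContinuousMultilinearMap.mkPiAlgebraFin ℝ n ℝ

lemma pSeries_norm_le (n : ℕ) : ‖pSeries n‖ ≤ 1 := by
  rw [pSeries, norm_smul _ (ContinuousMultilinearMap.mkPiAlgebraFin ℝ n ℝ),
    ContinuousMultilinearMap.norm_mkPiAlgebraFin, mul_one, Real.norm_eq_abs]
  exact aCoef_abs_le n

def gFun : ℝ → ℝ := fun t => ∑' n : ℕ, aCoef n * t^n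

lemma hasFP : HasFPowerSeriesOnBall gFun pSeries 0 1 := by
  refine ⟨?_, one_pos, ?_⟩
  · have := pSeries.le_radius_of_bound 1 (r := 1) (fun n => by
      simpa using pSeries_norm_le n)
    simpa using this
  · intro y hy
    rw [mem_emetric_ball_zero_iff] at hy
    have hy' : |y| < 1 := by
      rw [← Real.norm_eq_abs]
      rw [← ofReal_norm, ENNReal.ofReal_lt_one] at hy
      exact hy
    have hs : Summable (fun n : ℕ => aCoef n * y^n) := by
      apply Summable.of_norm_bounded (summable_geometric_of_lt_one (abs_nonneg y) hy')
      intro n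
      rw [norm_mul, Real.norm_eq_abs, Real.norm_eq_abs, abs_pow]
      calc |aCoef n| * |y|^n ≤ 1 * |y|^n :=
            mul_le_mul_of_nonneg_right (aCoef_abs_le n) (by positivity)
        _ = |y|^n := one_mul _
    have h2 : (fun n : ℕ => pSeries n (fun _ => y)) = fun n : ℕ => aCoef n * y^n := by
      funext n
      simp [pSeries, ContinuousMultilinearMap.mkPiAlgebraFin_apply, List.ofFn_const,
        List.prod_replicate, smul_eq_mul]
    rw [h2, zero_add]
    exact hs.hasSum

lemma hphi_eq {z : ℂ} (hz : 0 < z.im) : phiH z = gFun (Real.exp (-z.im)) := by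
  classical
  set t : ℝ := Real.exp (-z.im) with htdef
  have hinj : Function.Injective (fun j : ℕ => 2^(j+1)) := by
    intro i j h
    have := Nat.pow_right_injective (le_refl 2) (h : 2^(i+1) = 2^(j+1))
    omega
  have hsupp : Function.support (fun n : ℕ => aCoef n * t^n)
      ⊆ Set.range (fun j : ℕ => 2^(j+1)) := by
    intro n hn
    by_contra h
    exact hn (by simp [aCoef, h])
  have hre := hinj.tsum_eq (f := fun n : ℕ => aCoef n * t^n) hsupp
  have hterm : ∀ j : ℕ, aCoef (2^(j+1)) * t^(2^(j+1)) 
      = ((2:ℝ)⁻¹)^(j+1) * Real.exp (-(2:ℝ)^(j+1) * z.im) := by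
    intro j
    have h1 : aCoef (2^(j+1)) = ((2:ℝ)⁻¹)^(j+1) := by
      rw [aCoef, if_pos ⟨j, rfl⟩, inv_pow]
      congr 1
      push_cast
      ring
    have h2 : t^(2^(j+1) : ℕ) = Real.exp (-(2:ℝ)^(j+1) * z.im) := by
      rw [htdef, ← Real.exp_nat_mul]
      congr 1
      push_cast
      ring
    rw [h1, h2]
  calc phiH z = ∑' j : ℕ, aCoef (2^(j+1)) * t^(2^(j+1)) := by
        rw [phiH]
        exact (tsum_congr hterm).symm
    _ = ∑' n : ℕ, aCoef n * t^n := hre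
    _ = gFun t := rfl

lemma phiH_contDiffOn : ContDiffOn ℝ (⊤ : ℕ∞) phiH {z : ℂ | 0 < z.im} := by
  intro z hz
  have hz' : 0 < z.im := hz
  apply ContDiffAt.contDiffWithinAt
  have hinner : ContDiffAt ℝ (⊤ : ℕ∞) (fun w : ℂ => Real.exp (-w.im)) z := by
    apply ContDiff.contDiffAt
    exact Real.contDiff_exp.comp (Complex.imCLM.contDiff.neg)
  have houter : AnalyticAt ℝ gFun (Real.exp (-z.im)) := by
    apply hasFP.analyticAt_of_mem
    rw [mem_emetric_ball_zero_iff]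
    have h1 : ‖Real.exp (-z.im)‖ < 1 := by
      rw [Real.norm_eq_abs, abs_of_pos (Real.exp_pos _), Real.exp_lt_one_iff]
      linarith
    rw [← ofReal_norm, ENNReal.ofReal_lt_one]
    exact h1
  have hcomp := houter.contDiffAt.comp (n := (⊤ : ℕ∞)) z hinner
  apply hcomp.congr_of_eventuallyEq
  apply Filter.eventuallyEq_of_mem ((isOpen_lt continuous_const Complex.continuous_im).mem_nhds hz')
  intro w hw
  exact hphi_eq hw

lemma summable_base'' {y : ℝ} (hy : 0 ≤ y) :
    Summable (fun j : ℕ => ((2:ℝ)⁻¹)^(j+1) * Real.exp (-(2:ℝ)^(j+1) * y)) := by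
  apply Summable.of_nonneg_of_le (fun j => by positivity) (fun j => ?_) summable_geom_half
  calc ((2:ℝ)⁻¹)^(j+1) * Real.exp (-(2:ℝ)^(j+1) * y)
      ≤ ((2:ℝ)⁻¹)^(j+1) * 1 := by
        apply mul_le_mul_of_nonneg_left _ (by positivity)
        rw [Real.exp_le_one_iff]
        have : (0:ℝ) ≤ (2:ℝ)^(j+1) * y := by positivity
        linarith
    _ = ((2:ℝ)⁻¹)^(j+1) := mul_one _

lemma phiH_bounds {z : ℂ} (hz : 0 < z.im) : 0 ≤ phiH z ∧ phiH z ≤ 1 := by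
  constructor
  · exact tsum_nonneg (fun j => by positivity)
  · have h1 : phiH z ≤ ∑' j : ℕ, ((2:ℝ)⁻¹)^(j+1) := by
      apply Summable.tsum_le_tsum _ (summable_base'' hz.le) summable_geom_half
      intro j
      calc ((2:ℝ)⁻¹)^(j+1) * Real.exp (-(2:ℝ)^(j+1) * z.im)
          ≤ ((2:ℝ)⁻¹)^(j+1) * 1 := by
            apply mul_le_mul_of_nonneg_left _ (by positivity)
            rw [Real.exp_le_one_iff]
            have : (0:ℝ) ≤ (2:ℝ)^(j+1) * z.im := by positivity
            linarith
        _ = ((2:ℝ)⁻¹)^(j+1) := mul_one _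
    rw [tsum_geom_half] at h1
    exact h1

lemma blowup {M : ℝ} (hM : 0 < M) : ∃ δ : ℝ, 0 < δ ∧ ∀ z : ℂ, 0 < z.im → z.im < δ →
    M ≤ ∑' j : ℕ, (2:ℝ)^(j+1) * Real.exp (-(2:ℝ)^(j+1) * z.im) := by
  obtain ⟨J, hJ⟩ := pow_unbounded_of_one_lt (2*M) (by norm_num : (1:ℝ) < 2)
  refine ⟨Real.log 2 / 2^(J+1), by positivity, ?_⟩
  intro z hz hδ
  have hterm : M ≤ (2:ℝ)^(J+1) * Real.exp (-(2:ℝ)^(J+1) * z.im) := by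
    have hexp : (2:ℝ)⁻¹ ≤ Real.exp (-(2:ℝ)^(J+1) * z.im) := by
      have h1 : (2:ℝ)^(J+1) * z.im < Real.log 2 := by
        rw [lt_div_iff₀ (by positivity : (0:ℝ) < 2^(J+1))] at hδ
        linarith
      have h2 : -Real.log 2 < -(2:ℝ)^(J+1) * z.im := by linarith
      calc (2:ℝ)⁻¹ = Real.exp (-Real.log 2) := by
            rw [Real.exp_neg, Real.exp_log (by norm_num)]
        _ ≤ Real.exp (-(2:ℝ)^(J+1) * z.im) := Real.exp_le_exp.mpr h2.le
    calc M ≤ (2:ℝ)^(J+1) * (2:ℝ)⁻¹ := by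
          rw [pow_succ]
          have h2J : (0:ℝ) < (2:ℝ)^J := by positivity
          nlinarith
      _ ≤ (2:ℝ)^(J+1) * Real.exp (-(2:ℝ)^(J+1) * z.im) := by
          apply mul_le_mul_of_nonneg_left hexp (by positivity)
  calc M ≤ (2:ℝ)^(J+1) * Real.exp (-(2:ℝ)^(J+1) * z.im) := hterm
    _ ≤ ∑' j : ℕ, (2:ℝ)^(j+1) * Real.exp (-(2:ℝ)^(j+1) * z.im) :=
        Summable.le_tsum (summable_snd_eps' hz) J (fun i _ => by positivity)

/-- on `H = {Im z > 0}` the series defining `φ` converges and defines a smooth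
function with `0 ≤ φ ≤ 1`; `φ` is subharmonic with `Δφ(z) = Σ_{j=1}^∞ 2^j e^{−2^j Im z} ≥ 0`;
and `Δφ(z) → ∞` as `z` approaches the boundary. -/
theorem stmt13 :
    (∀ z : ℂ, 0 < z.im →
      Summable (fun j : ℕ => ((2:ℝ)⁻¹)^(j+1) * Real.exp (-(2:ℝ)^(j+1) * z.im))) ∧
    ContDiffOn ℝ (⊤ : ℕ∞) phiH {z : ℂ | 0 < z.im} ∧
    (∀ z : ℂ, 0 < z.im → 0 ≤ phiH z ∧ phiH z ≤ 1) ∧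
    (∀ z : ℂ, 0 < z.im →
      lapC phiH z = ∑' j : ℕ, (2:ℝ)^(j+1) * Real.exp (-(2:ℝ)^(j+1) * z.im) ∧
      0 ≤ lapC phiH z) ∧
    (∀ M : ℝ, 0 < M → ∃ δ : ℝ, 0 < δ ∧
      ∀ z : ℂ, 0 < z.im → z.im < δ → M ≤ lapC phiH z) := by
  refine ⟨fun z hz => summable_base' hz.le, phiH_contDiffOn, fun z hz => phiH_bounds hz,
    fun z hz => ⟨lap_eq hz, ?_⟩, fun M hM => ?_⟩
  · rw [lap_eq hz]
    exact tsum_nonneg (fun j => by positivity)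
  · obtain ⟨δ, hδ, h⟩ := blowup hM
    refine ⟨δ, hδ, fun z hz1 hz2 => ?_⟩
    rw [lap_eq hz1]
    exact h z hz1 hz2
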